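/- Let n ≥ 1 and let a be a symmetric positive semidefinite n×n real matrix. Then for every long-only portfolio vector π (i.e. π ∈ ℝⁿ with πᵢ ≥ 0 for all i and Σᵢ πᵢ = 1), the excess growth rate γ*_π(a) := (1/2)(Σᵢ πᵢ aᵢᵢ − Σᵢ Σⱼ πᵢ aᵢⱼ πⱼ) is nonnegative. -/

import Mathlib

open Finset Matrix

/-- nonnegativity of the excess growth rate for long-only portfolios. -/
theorem excess_growth_nonneg
    (n : ℕ) (hn : 1 ≤ n)
    (a : Matrix (Fin n) (Fin n) ℝ) (hsym : a.IsSymm) (hpsd : a.PosSemidef)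
    (π : Fin n → ℝ) (hπ0 : ∀ i, 0 ≤ π i) (hπ1 : ∑ i, π i = 1) :
    0 ≤ (1 / 2) * (∑ i, π i * a i i - ∑ i, ∑ j, π i * a i j * π j) := by
  have key : ∀ i j : Fin n, 0 ≤ a i i + a j j - 2 * a i j := by
    intro i j
    have h := (posSemidef_iff_dotProduct_mulVec.mp hpsd).2 (Pi.single i 1 - Pi.single j 1)
    have hsy : a j i = a i j := by
      have := congrFun (congrFun hsym j) i
      simpa [Matrix.transpose_apply] using this.symm
    simp only [star_trivial, dotProduct, mulVec, Pi.sub_apply, sub_mul, mul_sub,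
      Finset.sum_sub_distrib] at h
    simp only [Pi.single_apply, dotProduct] at h
    simp only [Finset.sum_ite_eq', Finset.mem_univ, if_true, mul_ite, mul_one, mul_zero,
      ite_mul, one_mul, zero_mul, Finset.sum_ite_eq] at h
    nlinarith [h]
  have hS : 0 ≤ ∑ i, ∑ j, π i * π j * (a i i + a j j - 2 * a i j) := by
    apply Finset.sum_nonneg; intro i _
    apply Finset.sum_nonneg; intro j _
    exact mul_nonneg (mul_nonneg (hπ0 i) (hπ0 j)) (key i j)
  have hA1 : ∑ i, ∑ j, π i * π j * a i i = ∑ i, π i * a i i := by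
    calc ∑ i, ∑ j, π i * π j * a i i = ∑ i, (π i * a i i) * ∑ j, π j := by
          congr 1; ext i; rw [Finset.mul_sum]; congr 1; ext j; ring
      _ = ∑ i, π i * a i i := by rw [hπ1]; simp
  have hA2 : ∑ i, ∑ j, π i * π j * a j j = ∑ i, π i * a i i := by
    rw [Finset.sum_comm]
    calc ∑ j, ∑ i, π i * π j * a j j = ∑ j, (π j * a j j) * ∑ i, π i := by
          congr 1; ext j; rw [Finset.mul_sum]; congr 1; ext i; ring
      _ = ∑ i, π i * a i i := by rw [hπ1]; simp
  have expand : ∑ i, ∑ j, π i * π j * (a i i + a j j - 2 * a i j)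
      = 2 * (∑ i, π i * a i i) - 2 * ∑ i, ∑ j, π i * a i j * π j := by
    have : ∑ i, ∑ j, π i * π j * (a i i + a j j - 2 * a i j)
        = (∑ i, ∑ j, π i * π j * a i i) + (∑ i, ∑ j, π i * π j * a j j)
          - 2 * ∑ i, ∑ j, π i * a i j * π j := by
      rw [← Finset.sum_add_distrib, Finset.mul_sum, ← Finset.sum_sub_distrib]
      congr 1; ext i
      rw [← Finset.sum_add_distrib, Finset.mul_sum, ← Finset.sum_sub_distrib]
      congr 1; ext j; ring
    rw [this, hA1, hA2]; ring
  linarith [hS, expand ▸ hS]
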